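/- arXiv:2501.15033 — 3 statements merged into one kernel-verified Lean document; each statement's English description precedes it below -/
import Mathlib

section
/- The explicit upper linear sieve functions fit together into a solution of the linear sieve differential-difference system: F₂(3) = F₁(3), F₃(5) = F₂(5), the function s ↦ s·F₂(s) is differentiable on (3,5) with derivative f₁(s−1) at every s ∈ (3,5), and the function s ↦ s·F₃(s) is differentiable on (5,7) with derivative f₂(s−1) at every s ∈ (5,7). -/
open Real MeasureTheory Set

/-- The upper linear sieve function `F₁`, valid for `0 < s ≤ 3`. -/
noncomputable def F₁ (s : ℝ) : ℝ := 2 * Real.exp Real.eulerMascheroniConstant / s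

/-- The upper linear sieve function `F₂`, valid for `3 ≤ s ≤ 5`. -/
noncomputable def F₂ (s : ℝ) : ℝ :=
  (2 * Real.exp Real.eulerMascheroniConstant / s) *
    (1 + ∫ t in (2:ℝ)..(s - 1), Real.log (t - 1) / t)

/-- The upper linear sieve function `F₃`, valid for `5 ≤ s ≤ 7`. -/
noncomputable def F₃ (s : ℝ) : ℝ :=
  (2 * Real.exp Real.eulerMascheroniConstant / s) *
    (1 + (∫ t in (2:ℝ)..(s - 1), Real.log (t - 1) / t)
      + ∫ t in (2:ℝ)..(s - 3), (Real.log (t - 1) / t) *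
          ∫ u in (t + 2)..(s - 1), (1 / u) * Real.log ((u - 1) / (t + 1)))

/-- The lower linear sieve function `f₁`, valid for `2 ≤ s ≤ 4`. -/
noncomputable def f₁ (s : ℝ) : ℝ :=
  (2 * Real.exp Real.eulerMascheroniConstant / s) * Real.log (s - 1)

/-- The lower linear sieve function `f₂`, valid for `4 ≤ s ≤ 6`. -/
noncomputable def f₂ (s : ℝ) : ℝ :=
  (2 * Real.exp Real.eulerMascheroniConstant / s) *
    (Real.log (s - 1)
      + ∫ t in (3:ℝ)..(s - 1), (1 / t) * ∫ u in (2:ℝ)..(t - 1), Real.log (u - 1) / u)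

/-! ### Auxiliary functions -/

noncomputable def sg (t : ℝ) : ℝ := Real.log (t - 1) / t
noncomputable def sG (x : ℝ) : ℝ := ∫ t in (2:ℝ)..x, sg t
noncomputable def sm (t : ℝ) : ℝ := sg t * Real.log (t + 1)
noncomputable def sn (t : ℝ) : ℝ := sg t * (Real.log (t + 1) * Real.log (t + 2))
noncomputable def sp (t : ℝ) : ℝ := sg t * sG (t + 2)
noncomputable def sq1 (t : ℝ) : ℝ := (1 / t) * sG (t - 1)
noncomputable def sM (x : ℝ) : ℝ := ∫ t in (2:ℝ)..x, sm t
noncomputable def sN (x : ℝ) : ℝ := ∫ t in (2:ℝ)..x, sn t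
noncomputable def sP (x : ℝ) : ℝ := ∫ t in (2:ℝ)..x, sp t
noncomputable def sQ (x : ℝ) : ℝ := ∫ t in (3:ℝ)..x, sq1 t

/-! ### Basic continuity / FTC lemmas -/

lemma intgbl {f : ℝ → ℝ} {a b : ℝ} (hf : ∀ t ∈ Set.uIcc a b, ContinuousAt f t) :
    IntervalIntegrable f MeasureTheory.volume a b :=
  (ContinuousOn.intervalIntegrable (fun t ht => (hf t ht).continuousWithinAt))

/-- generic FTC helper. -/
lemma ftc {f : ℝ → ℝ} {a c : ℝ} (hf : ∀ t, c < t → ContinuousAt f t) (ha : c < a)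
    {x : ℝ} (hx : c < x) :
    HasDerivAt (fun u => ∫ t in a..u, f t) (f x) x := by
  have hint : IntervalIntegrable f MeasureTheory.volume a x := by
    apply intgbl
    intro t ht
    rw [Set.uIcc_eq_union] at ht
    rcases ht with ht | ht
    · exact hf t (lt_of_lt_of_le ha ht.1)
    · exact hf t (lt_of_lt_of_le hx ht.1)
  have hmeas : StronglyMeasurableAtFilter f (nhds x) MeasureTheory.volume := by
    refine (ContinuousAt.stronglyMeasurableAtFilter isOpen_Ioi ?_) x hx
    exact fun t ht => hf t ht
  exact (intervalIntegral.integral_hasStrictDerivAt_right hint hmeas (hf x hx)).hasDerivAt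

lemma hsub (a x : ℝ) : HasDerivAt (fun y : ℝ => y - a) 1 x := (hasDerivAt_id x).sub_const a

lemma hadd (a x : ℝ) : HasDerivAt (fun y : ℝ => y + a) 1 x := (hasDerivAt_id x).add_const a

lemma log_sub_contAt {a t : ℝ} (h : t - a ≠ 0) :
    ContinuousAt (fun x : ℝ => Real.log (x - a)) t :=
  by have := ((Real.hasDerivAt_log h).comp t (hsub a t)).continuousAt; exact this

lemma log_add_contAt {a t : ℝ} (h : t + a ≠ 0) :
    ContinuousAt (fun x : ℝ => Real.log (x + a)) t :=
  by have := ((Real.hasDerivAt_log h).comp t (hadd a t)).continuousAt; exact this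

lemma sg_contAt {t : ℝ} (ht : 1 < t) : ContinuousAt sg t := by
  unfold sg
  exact (log_sub_contAt (by intro h; linarith)).div
    (show ContinuousAt (fun x : ℝ => x) t from continuousAt_id) (by positivity)

lemma sG_deriv {x : ℝ} (hx : 1 < x) : HasDerivAt sG (sg x) x :=
  ftc (fun t ht => sg_contAt ht) one_lt_two hx

lemma sG_contAt {x : ℝ} (hx : 1 < x) : ContinuousAt sG x := (sG_deriv hx).continuousAt

lemma sm_contAt {t : ℝ} (ht : 1 < t) : ContinuousAt sm t := by
  unfold sm
  exact (sg_contAt ht).mul (log_add_contAt (by intro h; linarith))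

lemma sn_contAt {t : ℝ} (ht : 1 < t) : ContinuousAt sn t := by
  unfold sn
  exact (sg_contAt ht).mul
    ((log_add_contAt (by intro h; linarith)).mul
      (log_add_contAt (by intro h; linarith)))

lemma sp_contAt {t : ℝ} (ht : 1 < t) : ContinuousAt sp t := by
  unfold sp
  refine (sg_contAt ht).mul ?_
  exact ((sG_deriv (by linarith : (1:ℝ) < t + 2)).comp t (hadd 2 t)).continuousAt

lemma sq1_contAt {t : ℝ} (ht : 2 < t) : ContinuousAt sq1 t := by
  unfold sq1
  refine (continuousAt_const.div (show ContinuousAt (fun x : ℝ => x) t from continuousAt_id)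
    (by positivity)).mul ?_
  exact ((sG_deriv (by linarith : (1:ℝ) < t - 1)).comp t (hsub 1 t)).continuousAt

lemma sM_deriv {x : ℝ} (hx : 1 < x) : HasDerivAt sM (sm x) x :=
  ftc (fun t ht => sm_contAt ht) one_lt_two hx

lemma sN_deriv {x : ℝ} (hx : 1 < x) : HasDerivAt sN (sn x) x :=
  ftc (fun t ht => sn_contAt ht) one_lt_two hx

lemma sP_deriv {x : ℝ} (hx : 1 < x) : HasDerivAt sP (sp x) x :=
  ftc (fun t ht => sp_contAt ht) one_lt_two hx

lemma sQ_deriv {x : ℝ} (hx : 2 < x) : HasDerivAt sQ (sq1 x) x :=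
  ftc (fun t ht => sq1_contAt ht) (by norm_num) hx

/-! ### The key identity -/

lemma claimB : ∀ x ∈ Set.Icc (4:ℝ) 6,
    Real.log (x - 1) * sG (x - 2) - sM (x - 2) = sQ (x - 1) := by
  have hf : ∀ x ∈ Set.Icc (4:ℝ) 6,
      HasDerivAt (fun y => Real.log (y - 1) * sG (y - 2) - sM (y - 2)) (sG (x - 2) / (x - 1)) x := by
    intro x hx
    obtain ⟨hx4, hx6⟩ := hx
    have hne : x - 1 ≠ 0 := by intro h; linarith
    have h1 : HasDerivAt (fun y : ℝ => Real.log (y - 1)) ((x - 1)⁻¹ * 1) x :=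
      by have := (Real.hasDerivAt_log hne).comp x (hsub 1 _); exact this
    have h2 : HasDerivAt (fun y : ℝ => sG (y - 2)) (sg (x - 2) * 1) x :=
      (sG_deriv (by linarith)).comp x (hsub 2 _)
    have h3 : HasDerivAt (fun y : ℝ => sM (y - 2)) (sm (x - 2) * 1) x :=
      (sM_deriv (by linarith)).comp x (hsub 2 _)
    have key : HasDerivAt (fun y => Real.log (y - 1) * sG (y - 2) - sM (y - 2))
        ((x - 1)⁻¹ * 1 * sG (x - 2) + Real.log (x - 1) * (sg (x - 2) * 1) - sm (x - 2) * 1) x :=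
      (h1.mul h2).sub h3
    convert key using 1
    simp only [sm, sg, show x - 2 + 1 = x - 1 by ring]
    field_simp
    ring
  have hg : ∀ x ∈ Set.Icc (4:ℝ) 6,
      HasDerivAt (fun y => sQ (y - 1)) (sG (x - 2) / (x - 1)) x := by
    intro x hx
    obtain ⟨hx4, hx6⟩ := hx
    have h1 : HasDerivAt (fun y : ℝ => sQ (y - 1)) (sq1 (x - 1) * 1) x :=
      (sQ_deriv (by linarith)).comp x (hsub 1 _)
    convert h1 using 1
    simp only [sq1, show x - 1 - 1 = x - 2 by ring]
    ring
  exact eq_of_has_deriv_right_eq (a := (4:ℝ)) (b := 6)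
    (f' := fun x => sG (x - 2) / (x - 1))
    (fun x hx => (hf x (Set.mem_Icc_of_Ico hx)).hasDerivWithinAt)
    (fun x hx => (hg x (Set.mem_Icc_of_Ico hx)).hasDerivWithinAt)
    (fun x hx => ((hf x hx).continuousAt).continuousWithinAt)
    (fun x hx => ((hg x hx).continuousAt).continuousWithinAt)
    (by norm_num [sG, sM, sQ])

/-! ### Rewriting the double integral in `F₃` -/

lemma inner_eq {s t : ℝ} (hs : s ∈ Set.Ioo (5:ℝ) 7) (ht : t ∈ Set.Icc (2:ℝ) (s - 3)) :
    (∫ u in (t + 2)..(s - 1), (1 / u) * Real.log ((u - 1) / (t + 1)))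
      = (sG (s - 1) - sG (t + 2)) - Real.log (t + 1) * (Real.log (s - 1) - Real.log (t + 2)) := by
  obtain ⟨hs5, hs7⟩ := hs
  obtain ⟨ht2, hts⟩ := ht
  have hle : t + 2 ≤ s - 1 := by linarith
  have hcongr : ∀ u ∈ Set.uIcc (t + 2) (s - 1),
      (1 / u) * Real.log ((u - 1) / (t + 1)) = sg u - Real.log (t + 1) * (1 / u) := by
    intro u hu
    rw [Set.uIcc_of_le hle] at hu
    have hu1 : (4:ℝ) ≤ u := by linarith [hu.1]
    rw [Real.log_div (by intro h; linarith) (by intro h; linarith)]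
    unfold sg
    ring
  rw [intervalIntegral.integral_congr hcongr]
  have hint1 : IntervalIntegrable sg MeasureTheory.volume (t + 2) (s - 1) := by
    apply intgbl; intro u hu
    rw [Set.uIcc_of_le hle] at hu
    exact sg_contAt (by linarith [hu.1])
  have hint2 : IntervalIntegrable (fun u => Real.log (t + 1) * (1 / u))
      MeasureTheory.volume (t + 2) (s - 1) := by
    apply intgbl; intro u hu
    rw [Set.uIcc_of_le hle] at hu
    have hu0 : u ≠ 0 := by intro h; rw [h] at hu; linarith [hu.1]
    exact continuousAt_const.mul (continuousAt_const.div
      (show ContinuousAt (fun x : ℝ => x) u from continuousAt_id) hu0)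
  rw [intervalIntegral.integral_sub hint1 hint2, intervalIntegral.integral_const_mul]
  have h0 : (0:ℝ) ∉ Set.uIcc (t + 2) (s - 1) := by
    rw [Set.uIcc_of_le hle]
    intro h
    linarith [h.1]
  rw [integral_one_div h0]
  have hGsub : (∫ u in (t + 2)..(s - 1), sg u) = sG (s - 1) - sG (t + 2) := by
    have ha : IntervalIntegrable sg MeasureTheory.volume 2 (s - 1) := by
      apply intgbl; intro u hu
      rw [Set.uIcc_of_le (by linarith : (2:ℝ) ≤ s - 1)] at hu
      exact sg_contAt (by linarith [hu.1])
    have hb : IntervalIntegrable sg MeasureTheory.volume 2 (t + 2) := by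
      apply intgbl; intro u hu
      rw [Set.uIcc_of_le (by linarith : (2:ℝ) ≤ t + 2)] at hu
      exact sg_contAt (by linarith [hu.1])
    rw [← intervalIntegral.integral_interval_sub_left ha hb]
    rfl
  rw [hGsub, Real.log_div (by intro h; linarith) (by intro h; linarith)]

lemma Brw {s : ℝ} (hs : s ∈ Set.Ioo (5:ℝ) 7) :
    (∫ t in (2:ℝ)..(s - 3), (Real.log (t - 1) / t) *
        ∫ u in (t + 2)..(s - 1), (1 / u) * Real.log ((u - 1) / (t + 1)))
      = sG (s - 1) * sG (s - 3) - sP (s - 3) - Real.log (s - 1) * sM (s - 3) + sN (s - 3) := by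
  obtain ⟨hs5, hs7⟩ := hs
  have hle : (2:ℝ) ≤ s - 3 := by linarith
  have hcongr : ∀ t ∈ Set.uIcc (2:ℝ) (s - 3),
      (Real.log (t - 1) / t) * (∫ u in (t + 2)..(s - 1), (1 / u) * Real.log ((u - 1) / (t + 1)))
        = sG (s - 1) * sg t - sp t - Real.log (s - 1) * sm t + sn t := by
    intro t ht
    rw [Set.uIcc_of_le hle] at ht
    rw [inner_eq ⟨hs5, hs7⟩ ht]
    simp only [sg, sp, sm, sn]
    ring
  rw [intervalIntegral.integral_congr hcongr]
  have hi1 : IntervalIntegrable (fun t => sG (s - 1) * sg t) MeasureTheory.volume 2 (s - 3) := by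
    apply intgbl; intro t ht; rw [Set.uIcc_of_le hle] at ht
    exact continuousAt_const.mul (sg_contAt (by linarith [ht.1]))
  have hi2 : IntervalIntegrable sp MeasureTheory.volume 2 (s - 3) := by
    apply intgbl; intro t ht; rw [Set.uIcc_of_le hle] at ht
    exact sp_contAt (by linarith [ht.1])
  have hi3 : IntervalIntegrable (fun t => Real.log (s - 1) * sm t)
      MeasureTheory.volume 2 (s - 3) := by
    apply intgbl; intro t ht; rw [Set.uIcc_of_le hle] at ht
    exact continuousAt_const.mul (sm_contAt (by linarith [ht.1]))
  have hi4 : IntervalIntegrable sn MeasureTheory.volume 2 (s - 3) := by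
    apply intgbl; intro t ht; rw [Set.uIcc_of_le hle] at ht
    exact sn_contAt (by linarith [ht.1])
  rw [intervalIntegral.integral_add ((hi1.sub hi2).sub hi3) hi4,
    intervalIntegral.integral_sub (hi1.sub hi2) hi3,
    intervalIntegral.integral_sub hi1 hi2,
    intervalIntegral.integral_const_mul, intervalIntegral.integral_const_mul]
  rfl

/-! ### Main theorem -/

theorem stmt6 :
    F₂ 3 = F₁ 3 ∧ F₃ 5 = F₂ 5 ∧
    (∀ s ∈ Set.Ioo (3:ℝ) 5, HasDerivAt (fun x : ℝ => x * F₂ x) (f₁ (s - 1)) s) ∧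
    (∀ s ∈ Set.Ioo (5:ℝ) 7, HasDerivAt (fun x : ℝ => x * F₃ x) (f₂ (s - 1)) s) := by
  refine ⟨?_, ?_, ?_, ?_⟩
  · norm_num [F₁, F₂]
  · norm_num [F₂, F₃]
  · intro s hs
    obtain ⟨h3, h5⟩ := hs
    have hev : (fun x : ℝ => x * F₂ x) =ᶠ[nhds s]
        fun x => 2 * Real.exp Real.eulerMascheroniConstant * (1 + sG (x - 1)) := by
      filter_upwards [Ioo_mem_nhds h3 h5] with x hx
      have hx0 : x ≠ 0 := by intro h; rw [h] at hx; linarith [hx.1]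
      simp only [F₂, sG, sg]
      field_simp
    have hd : HasDerivAt
        (fun x : ℝ => 2 * Real.exp Real.eulerMascheroniConstant * (1 + sG (x - 1)))
        (2 * Real.exp Real.eulerMascheroniConstant * (sg (s - 1) * 1)) s :=
      (((sG_deriv (by linarith : (1:ℝ) < s - 1)).comp s
        (hsub 1 _)).const_add 1).const_mul _
    have heq : 2 * Real.exp Real.eulerMascheroniConstant * (sg (s - 1) * 1) = f₁ (s - 1) := by
      simp only [f₁, sg, show s - 1 - 1 = s - 2 by ring]
      ring
    exact (heq ▸ hd).congr_of_eventuallyEq hev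
  · intro s hs
    obtain ⟨h5, h7⟩ := hs
    have hev : (fun x : ℝ => x * F₃ x) =ᶠ[nhds s]
        fun x => 2 * Real.exp Real.eulerMascheroniConstant * (1 + sG (x - 1) +
          (sG (x - 1) * sG (x - 3) - sP (x - 3) - Real.log (x - 1) * sM (x - 3) + sN (x - 3))) := by
      filter_upwards [Ioo_mem_nhds h5 h7] with x hx
      have hx0 : x ≠ 0 := by intro h; rw [h] at hx; linarith [hx.1]
      simp only [F₃]
      rw [Brw hx]
      have hGx : sG (x - 1) = ∫ t in (2:ℝ)..(x - 1), Real.log (t - 1) / t := rfl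
      rw [← hGx]
      field_simp
    have hd1 : HasDerivAt (fun x : ℝ => sG (x - 1)) (sg (s - 1) * 1) s :=
      by have := (sG_deriv (by linarith : (1:ℝ) < s - 1)).comp s (hsub 1 _); exact this
    have hd3 : HasDerivAt (fun x : ℝ => sG (x - 3)) (sg (s - 3) * 1) s :=
      by have := (sG_deriv (by linarith : (1:ℝ) < s - 3)).comp s (hsub 3 _); exact this
    have hdP : HasDerivAt (fun x : ℝ => sP (x - 3)) (sp (s - 3) * 1) s :=
      by have := (sP_deriv (by linarith : (1:ℝ) < s - 3)).comp s (hsub 3 _); exact this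
    have hdM : HasDerivAt (fun x : ℝ => sM (x - 3)) (sm (s - 3) * 1) s :=
      by have := (sM_deriv (by linarith : (1:ℝ) < s - 3)).comp s (hsub 3 _); exact this
    have hdN : HasDerivAt (fun x : ℝ => sN (x - 3)) (sn (s - 3) * 1) s :=
      by have := (sN_deriv (by linarith : (1:ℝ) < s - 3)).comp s (hsub 3 _); exact this
    have hdL : HasDerivAt (fun x : ℝ => Real.log (x - 1)) ((s - 1)⁻¹ * 1) s :=
      by have := (Real.hasDerivAt_log (by intro h; linarith : s - 1 ≠ 0)).comp s (hsub 1 _); exact this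
    have hd : HasDerivAt
        (fun x : ℝ => 2 * Real.exp Real.eulerMascheroniConstant * (1 + sG (x - 1) +
          (sG (x - 1) * sG (x - 3) - sP (x - 3) - Real.log (x - 1) * sM (x - 3) + sN (x - 3))))
        (2 * Real.exp Real.eulerMascheroniConstant * ((sg (s - 1) * 1) +
          ((sg (s - 1) * 1) * sG (s - 3) + sG (s - 1) * (sg (s - 3) * 1) - sp (s - 3) * 1
            - (((s - 1)⁻¹ * 1) * sM (s - 3) + Real.log (s - 1) * (sm (s - 3) * 1))
            + sn (s - 3) * 1))) s :=
      (((hd1.const_add 1).add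
        ((((hd1.mul hd3).sub hdP).sub (hdL.mul hdM)).add hdN)).const_mul _)
    have hKey : Real.log (s - 2) * sG (s - 3) - sM (s - 3) = sQ (s - 2) := by
      have h := claimB (s - 1) ⟨by linarith, by linarith⟩
      simpa [show s - 1 - 1 = s - 2 by ring, show s - 1 - 2 = s - 3 by ring] using h
    have heq : (2 * Real.exp Real.eulerMascheroniConstant * ((sg (s - 1) * 1) +
          ((sg (s - 1) * 1) * sG (s - 3) + sG (s - 1) * (sg (s - 3) * 1) - sp (s - 3) * 1
            - (((s - 1)⁻¹ * 1) * sM (s - 3) + Real.log (s - 1) * (sm (s - 3) * 1))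
            + sn (s - 3) * 1))) = f₂ (s - 1) := by
      have hf2 : f₂ (s - 1) = 2 * Real.exp Real.eulerMascheroniConstant / (s - 1) *
          (Real.log (s - 2) + sQ (s - 2)) := by
        simp only [f₂, sQ, sq1, sG, sg, show s - 1 - 1 = s - 2 by ring]
      rw [hf2, ← hKey]
      simp only [sp, sm, sn, sg, show s - 3 + 2 = s - 1 by ring,
        show s - 3 + 1 = s - 2 by ring]
      have hs1 : s - 1 ≠ 0 := by intro h; linarith
      field_simp
      ring
    exact (heq ▸ hd).congr_of_eventuallyEq hev
end

section
/- Let a, b be reals with 1 ≤ a < 3 and a + 5 < b ≤ 8, and let F : (0,7] → ℝ be defined by F(x) = F₁(x) for 0 < x ≤ 3, F(x) = F₂(x) for 3 ≤ x ≤ 5, and F(x) = F₃(x) for 5 ≤ x ≤ 7. Then ∫₁^{b−a} F(b−s) (1/s − 1/(b−a)) ds = 2e^γ (I₁(a,b) + I₂(a,b) + I₃(a,b)). -/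
open Real intervalIntegral MeasureTheory Set

/-- The quantity `I₁(a,b)`. -/
noncomputable def I₁ (a b : ℝ) : ℝ :=
  (1 / b) * Real.log ((b - 1) * (b - a) / a) - (1 / (b - a)) * Real.log ((b - 1) / a)

/-- The quantity `I₂(a,b)`. -/
noncomputable def I₂ (a b : ℝ) : ℝ :=
  ∫ t in (3:ℝ)..(b - 1), (1 / t) * (1 / (b - t) - 1 / (b - a)) *
    ∫ u in (2:ℝ)..(t - 1), Real.log (u - 1) / u

/-- The quantity `I₃(a,b)`. -/
noncomputable def I₃ (a b : ℝ) : ℝ :=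
  ∫ t in (5:ℝ)..(b - 1), (1 / t) * (1 / (b - t) - 1 / (b - a)) *
    ∫ u in (2:ℝ)..(t - 3), (Real.log (u - 1) / u) *
      ∫ v in (u + 2)..(t - 1), (1 / v) * Real.log ((v - 1) / (u + 1))

/-! ### Auxiliary clamped integrands and parametric integrals -/

noncomputable def gA (t : ℝ) : ℝ := Real.log (max t 2 - 1) / max t 2

noncomputable def gB (t u : ℝ) : ℝ :=
  (1 / max u 3) * Real.log ((max u 3 - 1) / (max t 1 + 1))

noncomputable def Kt (t y : ℝ) : ℝ := ∫ u in (t + 2)..y, gB t u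

lemma gA_cont : Continuous gA := by
  apply Continuous.div
  · exact Continuous.log (by fun_prop) (fun t => by have := le_max_right t 2; linarith)
  · fun_prop
  · intro t; have := le_max_right t 2; linarith

lemma gB_cont : Continuous (fun p : ℝ × ℝ => gB p.1 p.2) := by
  apply Continuous.mul
  · apply Continuous.div continuous_const (by fun_prop)
    intro p; have := le_max_right p.2 3; linarith
  · apply Continuous.log
    · apply Continuous.div (by fun_prop) (by fun_prop)
      intro p; have := le_max_right p.1 1; linarith
    · intro p
      have h1 := le_max_right p.2 3
      have h2 := le_max_right p.1 1
      have : (0:ℝ) < (max p.2 3 - 1) / (max p.1 1 + 1) := by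
        apply div_pos <;> linarith
      linarith

lemma gB_section_cont (t : ℝ) : Continuous (gB t) :=
  gB_cont.comp (continuous_const.prodMk continuous_id)

lemma gB_uncurry_cont : Continuous (Function.uncurry (fun (p : ℝ × ℝ) u => gB p.1 u)) :=
  gB_cont.comp ((continuous_fst.comp continuous_fst).prodMk continuous_snd)

lemma Kt_cont : Continuous (fun p : ℝ × ℝ => Kt p.1 p.2) := by
  have h : ∀ p : ℝ × ℝ, Kt p.1 p.2 =
      (∫ u in (0:ℝ)..p.2, gB p.1 u) - ∫ u in (0:ℝ)..(p.1 + 2), gB p.1 u := by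
    intro p
    rw [Kt, ← intervalIntegral.integral_interval_sub_left
      ((gB_section_cont p.1).intervalIntegrable 0 p.2)
      ((gB_section_cont p.1).intervalIntegrable 0 (p.1 + 2))]
  simp only [h]
  apply Continuous.sub
  · exact intervalIntegral.continuous_parametric_intervalIntegral_of_continuous
      gB_uncurry_cont continuous_snd
  · exact intervalIntegral.continuous_parametric_intervalIntegral_of_continuous
      gB_uncurry_cont (continuous_fst.add continuous_const)

lemma gA_eq {t : ℝ} (h : 2 ≤ t) : gA t = Real.log (t - 1) / t := by
  rw [gA, max_eq_left h]

lemma Kt_eq {t y : ℝ} (ht : 1 ≤ t) (hy : t + 2 ≤ y) :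
    Kt t y = ∫ u in (t + 2)..y, (1 / u) * Real.log ((u - 1) / (t + 1)) := by
  rw [Kt]
  apply intervalIntegral.integral_congr
  intro u hu
  rw [uIcc_of_le hy] at hu
  have h3 : (3:ℝ) ≤ u := le_trans (by linarith) hu.1
  rw [gB, max_eq_left h3, max_eq_left ht]

attribute [irreducible] Kt gB

noncomputable def AA (b s : ℝ) : ℝ := ∫ t in (2:ℝ)..(b - s - 1), gA t

noncomputable def BB (b s : ℝ) : ℝ :=
  ∫ t in (2:ℝ)..(b - s - 3), gA t * Kt t (b - s - 1)

lemma AA_cont (b : ℝ) : Continuous (AA b) :=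
  intervalIntegral.continuous_parametric_intervalIntegral_of_continuous
    (f := fun (_ : ℝ) t => gA t) (gA_cont.comp continuous_snd)
    (by fun_prop)

lemma BB_cont (b : ℝ) : Continuous (BB b) := by
  have hu : Continuous (Function.uncurry (fun (s : ℝ) t => gA t * Kt t (b - s - 1))) := by
    have h : Continuous fun q : ℝ × ℝ => gA q.2 * Kt q.2 (b - q.1 - 1) := by
      apply Continuous.mul (gA_cont.comp continuous_snd)
      have h2 : Continuous fun q : ℝ × ℝ => ((q.2 : ℝ), b - q.1 - 1) := by fun_prop
      exact Kt_cont.comp h2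
    exact h
  exact intervalIntegral.continuous_parametric_intervalIntegral_of_continuous hu
    (by fun_prop)

lemma AA_eq {b s : ℝ} (h : 2 ≤ b - s - 1) :
    AA b s = ∫ t in (2:ℝ)..(b - s - 1), Real.log (t - 1) / t := by
  rw [AA]
  apply intervalIntegral.integral_congr
  intro t ht
  rw [uIcc_of_le h] at ht
  exact gA_eq ht.1

lemma BB_eq {b s : ℝ} (h : 2 ≤ b - s - 3) :
    BB b s = ∫ t in (2:ℝ)..(b - s - 3), (Real.log (t - 1) / t) *
      ∫ u in (t + 2)..(b - s - 1), (1 / u) * Real.log ((u - 1) / (t + 1)) := by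
  rw [BB]
  apply intervalIntegral.integral_congr
  intro t ht
  rw [uIcc_of_le h] at ht
  show gA t * Kt t (b - s - 1) = _
  rw [gA_eq ht.1, Kt_eq (by linarith [ht.1]) (by linarith [ht.2])]

attribute [irreducible] AA BB gA

/-- the base factor of the integrand -/
noncomputable def f1 (a b s : ℝ) : ℝ :=
  2 * Real.exp Real.eulerMascheroniConstant / (b - s) * (1 / s - 1 / (b - a))

noncomputable def h2 (a b t : ℝ) : ℝ :=
  (1 / t) * (1 / (b - t) - 1 / (b - a)) * ∫ u in (2:ℝ)..(t - 1), Real.log (u - 1) / u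

noncomputable def h3 (a b t : ℝ) : ℝ :=
  (1 / t) * (1 / (b - t) - 1 / (b - a)) *
    ∫ u in (2:ℝ)..(t - 3), (Real.log (u - 1) / u) *
      ∫ v in (u + 2)..(t - 1), (1 / v) * Real.log ((v - 1) / (u + 1))

lemma I2_eq (a b : ℝ) : I₂ a b = ∫ t in (3:ℝ)..(b - 1), h2 a b t := rfl

lemma I3_eq (a b : ℝ) : I₃ a b = ∫ t in (5:ℝ)..(b - 1), h3 a b t := rfl

lemma f1_contOn (a b : ℝ) (ha : 1 ≤ a) (hab : a + 5 < b) :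
    ContinuousOn (f1 a b) (Icc 1 (b - a)) := by
  have : ∀ s ∈ Icc (1:ℝ) (b - a), b - s ≠ 0 := by
    intro s hs; rw [mem_Icc] at hs; have := hs.2; intro h; linarith
  apply ContinuousOn.mul
  · exact ContinuousOn.div continuousOn_const (by fun_prop) this
  · apply ContinuousOn.sub _ continuousOn_const
    exact ContinuousOn.div continuousOn_const (by fun_prop)
      (fun s hs => by rw [mem_Icc] at hs; have := hs.1; intro h; linarith)

/-- integrability helper for `f1` -/
lemma f1_ii (a b u v : ℝ) (ha : 1 ≤ a) (hab : a + 5 < b)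
    (h1 : 1 ≤ u) (h2 : u ≤ v) (h3 : v ≤ b - a) :
    IntervalIntegrable (f1 a b) volume u v := by
  apply ContinuousOn.intervalIntegrable
  apply (f1_contOn a b ha hab).mono
  rw [uIcc_of_le h2]
  exact Icc_subset_Icc h1 h3

lemma fA_ii (a b u v : ℝ) (ha : 1 ≤ a) (hab : a + 5 < b)
    (h1 : 1 ≤ u) (h2 : u ≤ v) (h3 : v ≤ b - a) :
    IntervalIntegrable (fun s => f1 a b s * AA b s) volume u v := by
  apply ContinuousOn.intervalIntegrable
  apply ContinuousOn.mul _ (AA_cont b).continuousOn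
  apply (f1_contOn a b ha hab).mono
  rw [uIcc_of_le h2]
  exact Icc_subset_Icc h1 h3

lemma fB_ii (a b u v : ℝ) (ha : 1 ≤ a) (hab : a + 5 < b)
    (h1 : 1 ≤ u) (h2 : u ≤ v) (h3 : v ≤ b - a) :
    IntervalIntegrable (fun s => f1 a b s * BB b s) volume u v := by
  apply ContinuousOn.intervalIntegrable
  apply ContinuousOn.mul _ (BB_cont b).continuousOn
  apply (f1_contOn a b ha hab).mono
  rw [uIcc_of_le h2]
  exact Icc_subset_Icc h1 h3

lemma ii_congr {f g : ℝ → ℝ} {a b : ℝ} (hf : IntervalIntegrable f volume a b)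
    (h : Set.EqOn f g (Set.uIcc a b)) : IntervalIntegrable g volume a b :=
  hf.congr_ae ((ae_restrict_mem measurableSet_uIoc).mono
    (fun _ hx => h (uIoc_subset_uIcc hx)))

/-! ### The three main integral computations -/

lemma L1 (a b : ℝ) (ha : 1 ≤ a) (hab : a + 5 < b) :
    ∫ s in (1:ℝ)..(b - a), f1 a b s
      = 2 * Real.exp Real.eulerMascheroniConstant * I₁ a b := by
  have hba : (5:ℝ) < b - a := by linarith
  have hb0 : (0:ℝ) < b := by linarith
  have hnot1 : (0:ℝ) ∉ uIcc 1 (b - a) := by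
    rw [uIcc_of_le (by linarith : (1:ℝ) ≤ b - a)]
    simp only [mem_Icc, not_and, not_le]
    intro h; linarith
  have hnot2 : (0:ℝ) ∉ uIcc a (b - 1) := by
    rw [uIcc_of_le (by linarith : a ≤ b - 1)]
    simp only [mem_Icc, not_and, not_le]
    intro h; linarith
  have ia : ∫ s in (1:ℝ)..(b - a), 1 / s = Real.log (b - a) := by
    rw [integral_one_div hnot1, div_one]
  have ibs : ∫ s in (1:ℝ)..(b - a), 1 / (b - s) = Real.log ((b - 1) / a) := by
    have h := intervalIntegral.integral_comp_sub_left (a := 1) (b := b - a)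
      (fun x : ℝ => 1 / x) b
    rw [show b - (b - a) = a by ring] at h
    rw [h, integral_one_div hnot2]
  set c := 2 * Real.exp Real.eulerMascheroniConstant with hc
  have hii1 : IntervalIntegrable (fun s : ℝ => c * (1 / b) * (1 / s)) volume 1 (b - a) := by
    apply ContinuousOn.intervalIntegrable
    apply ContinuousOn.mul continuousOn_const
    apply ContinuousOn.div continuousOn_const (by fun_prop)
    intro s hs
    rw [uIcc_of_le (by linarith : (1:ℝ) ≤ b - a), mem_Icc] at hs
    have := hs.1; intro h; linarith
  have hii2 : IntervalIntegrable
      (fun s : ℝ => (c * (1 / b) - c * (1 / (b - a))) * (1 / (b - s))) volume 1 (b - a) := by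
    apply ContinuousOn.intervalIntegrable
    apply ContinuousOn.mul continuousOn_const
    apply ContinuousOn.div continuousOn_const (by fun_prop)
    intro s hs
    rw [uIcc_of_le (by linarith : (1:ℝ) ≤ b - a), mem_Icc] at hs
    have := hs.2; intro h; linarith
  calc ∫ s in (1:ℝ)..(b - a), f1 a b s
      = ∫ s in (1:ℝ)..(b - a),
          (c * (1 / b) * (1 / s) + (c * (1 / b) - c * (1 / (b - a))) * (1 / (b - s))) := by
        apply intervalIntegral.integral_congr
        intro s hs
        rw [uIcc_of_le (by linarith : (1:ℝ) ≤ b - a), mem_Icc] at hs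
        have hs0 : s ≠ 0 := by intro h; linarith [hs.1]
        have hbs0 : b - s ≠ 0 := by intro h; linarith [hs.2]
        have hb0' : b ≠ 0 := by intro h; linarith
        have hba0 : b - a ≠ 0 := by intro h; linarith
        rw [f1]
        field_simp
        ring
    _ = (∫ s in (1:ℝ)..(b - a), c * (1 / b) * (1 / s))
          + ∫ s in (1:ℝ)..(b - a), (c * (1 / b) - c * (1 / (b - a))) * (1 / (b - s)) :=
        intervalIntegral.integral_add hii1 hii2
    _ = c * (1 / b) * Real.log (b - a)
          + (c * (1 / b) - c * (1 / (b - a))) * Real.log ((b - 1) / a) := by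
        rw [intervalIntegral.integral_const_mul, intervalIntegral.integral_const_mul, ia, ibs]
    _ = c * I₁ a b := by
        rw [I₁, show (b - 1) * (b - a) / a = (b - a) * ((b - 1) / a) by ring,
          Real.log_mul (by linarith) (ne_of_gt (div_pos (by linarith) (by linarith)))]
        ring

lemma L2 (a b : ℝ) (ha : 1 ≤ a) (hab : a + 5 < b) :
    ∫ s in (1:ℝ)..(b - 3), f1 a b s * AA b s
      = 2 * Real.exp Real.eulerMascheroniConstant * I₂ a b := by
  have h13 : (1:ℝ) ≤ b - 3 := by linarith
  calc ∫ s in (1:ℝ)..(b - 3), f1 a b s * AA b s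
      = ∫ s in (1:ℝ)..(b - 3),
          2 * Real.exp Real.eulerMascheroniConstant * h2 a b (b - s) := by
        apply intervalIntegral.integral_congr
        intro s hs
        rw [uIcc_of_le h13, mem_Icc] at hs
        show f1 a b s * AA b s
          = 2 * Real.exp Real.eulerMascheroniConstant * h2 a b (b - s)
        rw [f1, AA_eq (by linarith [hs.2]), h2, show b - (b - s) = s by ring]
        ring
    _ = 2 * Real.exp Real.eulerMascheroniConstant
          * ∫ s in (1:ℝ)..(b - 3), h2 a b (b - s) :=
        intervalIntegral.integral_const_mul _ _
    _ = 2 * Real.exp Real.eulerMascheroniConstant * I₂ a b := by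
        rw [intervalIntegral.integral_comp_sub_left (h2 a b) b,
          show b - (b - 3) = (3:ℝ) by ring, ← I2_eq]

lemma L3 (a b : ℝ) (ha : 1 ≤ a) (hab : a + 5 < b) :
    ∫ s in (1:ℝ)..(b - 5), f1 a b s * BB b s
      = 2 * Real.exp Real.eulerMascheroniConstant * I₃ a b := by
  have h15 : (1:ℝ) ≤ b - 5 := by linarith
  calc ∫ s in (1:ℝ)..(b - 5), f1 a b s * BB b s
      = ∫ s in (1:ℝ)..(b - 5),
          2 * Real.exp Real.eulerMascheroniConstant * h3 a b (b - s) := by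
        apply intervalIntegral.integral_congr
        intro s hs
        rw [uIcc_of_le h15, mem_Icc] at hs
        show f1 a b s * BB b s
          = 2 * Real.exp Real.eulerMascheroniConstant * h3 a b (b - s)
        rw [f1, BB_eq (by linarith [hs.2]), h3, show b - (b - s) = s by ring]
        ring
    _ = 2 * Real.exp Real.eulerMascheroniConstant
          * ∫ s in (1:ℝ)..(b - 5), h3 a b (b - s) :=
        intervalIntegral.integral_const_mul _ _
    _ = 2 * Real.exp Real.eulerMascheroniConstant * I₃ a b := by
        rw [intervalIntegral.integral_comp_sub_left (h3 a b) b,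
          show b - (b - 5) = (5:ℝ) by ring, ← I3_eq]

theorem stmt10 (a b : ℝ) (ha : 1 ≤ a) (ha3 : a < 3) (hab : a + 5 < b) (hb : b ≤ 8)
    (F : ℝ → ℝ)
    (hF1 : ∀ x : ℝ, 0 < x → x ≤ 3 → F x = F₁ x)
    (hF2 : ∀ x : ℝ, 3 ≤ x → x ≤ 5 → F x = F₂ x)
    (hF3 : ∀ x : ℝ, 5 ≤ x → x ≤ 7 → F x = F₃ x) :
    (∫ s in (1:ℝ)..(b - a), F (b - s) * (1 / s - 1 / (b - a)))
      = 2 * Real.exp Real.eulerMascheroniConstant * (I₁ a b + I₂ a b + I₃ a b) := by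
  have hb6 : (6:ℝ) < b := by linarith
  have h1p : (1:ℝ) ≤ b - 5 := by linarith
  have hpq : b - 5 ≤ b - 3 := by linarith
  have hqr : b - 3 ≤ b - a := by linarith
  -- the three pointwise descriptions
  have e1 : Set.EqOn (fun s => F (b - s) * (1 / s - 1 / (b - a)))
      (fun s => f1 a b s + f1 a b s * AA b s + f1 a b s * BB b s) (uIcc 1 (b - 5)) := by
    intro s hs
    rw [uIcc_of_le h1p, mem_Icc] at hs
    have h5 : (5:ℝ) ≤ b - s := by linarith [hs.2]
    have h7 : b - s ≤ 7 := by linarith [hs.1]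
    show F (b - s) * (1 / s - 1 / (b - a))
      = f1 a b s + f1 a b s * AA b s + f1 a b s * BB b s
    rw [hF3 _ h5 h7, F₃, f1, AA_eq (by linarith), BB_eq (by linarith)]
    ring
  have e2 : Set.EqOn (fun s => F (b - s) * (1 / s - 1 / (b - a)))
      (fun s => f1 a b s + f1 a b s * AA b s) (uIcc (b - 5) (b - 3)) := by
    intro s hs
    rw [uIcc_of_le hpq, mem_Icc] at hs
    have h3' : (3:ℝ) ≤ b - s := by linarith [hs.2]
    have h5 : b - s ≤ 5 := by linarith [hs.1]
    show F (b - s) * (1 / s - 1 / (b - a)) = f1 a b s + f1 a b s * AA b s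
    rw [hF2 _ h3' h5, F₂, f1, AA_eq (by linarith)]
    ring
  have e3 : Set.EqOn (fun s => F (b - s) * (1 / s - 1 / (b - a)))
      (f1 a b) (uIcc (b - 3) (b - a)) := by
    intro s hs
    rw [uIcc_of_le hqr, mem_Icc] at hs
    have h0 : (0:ℝ) < b - s := by linarith [hs.2]
    have h3' : b - s ≤ 3 := by linarith [hs.1]
    show F (b - s) * (1 / s - 1 / (b - a)) = _
    rw [hF1 _ h0 h3', F₁, f1]
  -- integrability of the original integrand on the three pieces
  have hG1 : IntervalIntegrable (fun s => F (b - s) * (1 / s - 1 / (b - a))) volume 1 (b - 5) := by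
    apply IntervalIntegrable.congr_ae _ (((ae_restrict_mem measurableSet_uIoc).mono
      (fun x hx => (e1 (uIoc_subset_uIcc hx)).symm)))
    exact ((f1_ii a b 1 (b - 5) ha hab le_rfl h1p (by linarith)).add
      (fA_ii a b 1 (b - 5) ha hab le_rfl h1p (by linarith))).add
      (fB_ii a b 1 (b - 5) ha hab le_rfl h1p (by linarith))
  have hG2 : IntervalIntegrable (fun s => F (b - s) * (1 / s - 1 / (b - a)))
      volume (b - 5) (b - 3) := by
    apply IntervalIntegrable.congr_ae _ (((ae_restrict_mem measurableSet_uIoc).mono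
      (fun x hx => (e2 (uIoc_subset_uIcc hx)).symm)))
    exact (f1_ii a b (b - 5) (b - 3) ha hab h1p hpq (by linarith)).add
      (fA_ii a b (b - 5) (b - 3) ha hab h1p hpq (by linarith))
  have hG3 : IntervalIntegrable (fun s => F (b - s) * (1 / s - 1 / (b - a)))
      volume (b - 3) (b - a) := by
    apply IntervalIntegrable.congr_ae _ (((ae_restrict_mem measurableSet_uIoc).mono
      (fun x hx => (e3 (uIoc_subset_uIcc hx)).symm)))
    exact f1_ii a b (b - 3) (b - a) ha hab (by linarith) hqr le_rfl
  calc (∫ s in (1:ℝ)..(b - a), F (b - s) * (1 / s - 1 / (b - a)))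
      = ((∫ s in (1:ℝ)..(b - 5), F (b - s) * (1 / s - 1 / (b - a)))
          + ∫ s in (b - 5)..(b - 3), F (b - s) * (1 / s - 1 / (b - a)))
          + ∫ s in (b - 3)..(b - a), F (b - s) * (1 / s - 1 / (b - a)) := by
        rw [intervalIntegral.integral_add_adjacent_intervals hG1 hG2,
          intervalIntegral.integral_add_adjacent_intervals (hG1.trans hG2) hG3]
    _ = ((∫ s in (1:ℝ)..(b - 5), (f1 a b s + f1 a b s * AA b s + f1 a b s * BB b s))
          + ∫ s in (b - 5)..(b - 3), (f1 a b s + f1 a b s * AA b s))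
          + ∫ s in (b - 3)..(b - a), f1 a b s := by
        rw [intervalIntegral.integral_congr e1, intervalIntegral.integral_congr e2,
          intervalIntegral.integral_congr e3]
    _ = (((∫ s in (1:ℝ)..(b - 5), f1 a b s) + (∫ s in (1:ℝ)..(b - 5), f1 a b s * AA b s)
          + ∫ s in (1:ℝ)..(b - 5), f1 a b s * BB b s)
          + ((∫ s in (b - 5)..(b - 3), f1 a b s)
            + ∫ s in (b - 5)..(b - 3), f1 a b s * AA b s))
          + ∫ s in (b - 3)..(b - a), f1 a b s := by
        rw [intervalIntegral.integral_add
            ((f1_ii a b 1 (b - 5) ha hab le_rfl h1p (by linarith)).add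
              (fA_ii a b 1 (b - 5) ha hab le_rfl h1p (by linarith)))
            (fB_ii a b 1 (b - 5) ha hab le_rfl h1p (by linarith)),
          intervalIntegral.integral_add
            (f1_ii a b 1 (b - 5) ha hab le_rfl h1p (by linarith))
            (fA_ii a b 1 (b - 5) ha hab le_rfl h1p (by linarith)),
          intervalIntegral.integral_add
            (f1_ii a b (b - 5) (b - 3) ha hab h1p hpq (by linarith))
            (fA_ii a b (b - 5) (b - 3) ha hab h1p hpq (by linarith))]
    _ = (∫ s in (1:ℝ)..(b - a), f1 a b s)
          + (∫ s in (1:ℝ)..(b - 3), f1 a b s * AA b s)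
          + ∫ s in (1:ℝ)..(b - 5), f1 a b s * BB b s := by
        rw [← intervalIntegral.integral_add_adjacent_intervals
            ((f1_ii a b 1 (b - 5) ha hab le_rfl h1p (by linarith)).trans
              (f1_ii a b (b - 5) (b - 3) ha hab h1p hpq (by linarith)))
            (f1_ii a b (b - 3) (b - a) ha hab (by linarith) hqr le_rfl),
          ← intervalIntegral.integral_add_adjacent_intervals
            (f1_ii a b 1 (b - 5) ha hab le_rfl h1p (by linarith))
            (f1_ii a b (b - 5) (b - 3) ha hab h1p hpq (by linarith)),
          ← intervalIntegral.integral_add_adjacent_intervals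
            (fA_ii a b 1 (b - 5) ha hab le_rfl h1p (by linarith))
            (fA_ii a b (b - 5) (b - 3) ha hab h1p hpq (by linarith))]
        ring
    _ = 2 * Real.exp Real.eulerMascheroniConstant * (I₁ a b + I₂ a b + I₃ a b) := by
        rw [L1 a b ha hab, L2 a b ha hab, L3 a b ha hab]
        ring
end

section
/- One has ∫₅^{5.6} (1/t) (1/(6.6−t) − 1/5.6) (∫₂^{t−3} (log(u−1)/u) (∫_{u+2}^{t−1} (1/v) log((v−1)/(u+1)) dv) du) dt < 0.00001. -/
open intervalIntegral MeasureTheory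

/-- FTC computation: ∫₀^L s (L-s)² ds = L⁴/12. -/
lemma poly_int (L : ℝ) : (∫ s in (0:ℝ)..L, s * (L - s) ^ 2) = L ^ 4 / 12 := by
  have h : ∀ x ∈ Set.uIcc (0:ℝ) L,
      HasDerivAt (fun s => s ^ 2 * L ^ 2 / 2 - 2 * L * s ^ 3 / 3 + s ^ 4 / 4)
        (x * (L - x) ^ 2) x := by
    intro x _
    have : HasDerivAt (fun s : ℝ => s ^ 2 * L ^ 2 / 2 - 2 * L * s ^ 3 / 3 + s ^ 4 / 4)
        ((2 * x) * L ^ 2 / 2 - 2 * L * (3 * x ^ 2) / 3 + (4 * x ^ 3) / 4) x := by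
      have h1 : HasDerivAt (fun s : ℝ => s ^ 2) (2 * x) x := by
        simpa using (hasDerivAt_pow 2 x)
      have h2 : HasDerivAt (fun s : ℝ => s ^ 3) (3 * x ^ 2) x := by
        simpa using (hasDerivAt_pow 3 x)
      have h3 : HasDerivAt (fun s : ℝ => s ^ 4) (4 * x ^ 3) x := by
        simpa using (hasDerivAt_pow 4 x)
      exact (((h1.mul_const (L ^ 2)).div_const 2).sub
        (((h2.const_mul (2 * L))).div_const 3)).add (h3.div_const 4)
    convert this using 1
    ring
  have hint : IntervalIntegrable (fun s : ℝ => s * (L - s) ^ 2) volume 0 L :=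
    (Continuous.intervalIntegrable (by continuity)) _ _
  rw [integral_eq_sub_of_hasDerivAt h hint]
  ring

set_option maxHeartbeats 2000000 in
theorem stmt12 :
    (∫ t in (5:ℝ)..(5.6:ℝ), (1 / t) * (1 / (6.6 - t) - 1 / 5.6) *
        ∫ u in (2:ℝ)..(t - 3), (Real.log (u - 1) / u) *
          ∫ v in (u + 2)..(t - 1), (1 / v) * Real.log ((v - 1) / (u + 1)))
      < 0.00001 := by
  -- Bound for the innermost integral
  have inner_bd : ∀ t ∈ Set.Ioc (5:ℝ) 5.6, ∀ u ∈ Set.Ioc (2:ℝ) (t - 3),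
      ‖∫ v in (u + 2)..(t - 1), (1 / v) * Real.log ((v - 1) / (u + 1))‖
        ≤ (t - u - 3) ^ 2 / 24 := by
    intro t ht u hu
    have hu2 : (2:ℝ) < u := hu.1
    have hut : u ≤ t - 3 := hu.2
    have hle : u + 2 ≤ t - 1 := by linarith
    have hbd : ∀ v ∈ Set.uIoc (u + 2) (t - 1),
        ‖(1 / v) * Real.log ((v - 1) / (u + 1))‖ ≤ (v - (u + 2)) / 12 := by
      intro v hv
      rw [Set.uIoc_of_le hle] at hv
      have hv1 : u + 2 < v := hv.1
      have hv2 : v ≤ t - 1 := hv.2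
      have hvpos : (0:ℝ) < v := by linarith
      have hu1 : (0:ℝ) < u + 1 := by linarith
      have hratio : (1:ℝ) ≤ (v - 1) / (u + 1) := by
        rw [le_div_iff₀ hu1]; linarith
      have hlog0 : 0 ≤ Real.log ((v - 1) / (u + 1)) := Real.log_nonneg hratio
      have hlogle : Real.log ((v - 1) / (u + 1)) ≤ (v - u - 2) / 3 := by
        have := Real.log_le_sub_one_of_pos (by linarith : (0:ℝ) < (v - 1) / (u + 1))
        have h2 : (v - 1) / (u + 1) - 1 ≤ (v - u - 2) / 3 := by
          rw [div_sub_one (by linarith : (u:ℝ) + 1 ≠ 0), div_le_div_iff₀ hu1 (by norm_num)]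
          nlinarith
        linarith
      have h1v : 1 / v ≤ 1 / 4 := by
        rw [div_le_div_iff₀ hvpos (by norm_num)]; linarith
      have hnn : 0 ≤ (1 / v) * Real.log ((v - 1) / (u + 1)) :=
        mul_nonneg (by positivity) hlog0
      rw [Real.norm_eq_abs, abs_of_nonneg hnn]
      calc (1 / v) * Real.log ((v - 1) / (u + 1))
          ≤ (1 / 4) * ((v - u - 2) / 3) := by
            apply mul_le_mul h1v hlogle hlog0 (by norm_num)
        _ = (v - (u + 2)) / 12 := by ring
    have hgint : IntervalIntegrable (fun v : ℝ => (v - (u + 2)) / 12) volume (u + 2) (t - 1) :=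
      (Continuous.intervalIntegrable (by continuity)) _ _
    have key := intervalIntegral.norm_integral_le_abs_of_norm_le
      (ae_restrict_of_forall_mem measurableSet_uIoc hbd) hgint
    have hcomp : (∫ v in (u + 2)..(t - 1), (v - (u + 2)) / 12) = (t - u - 3) ^ 2 / 24 := by
      rw [show (∫ v in (u + 2)..(t - 1), (v - (u + 2)) / 12)
          = ∫ v in (u + 2)..(t - 1), (fun x : ℝ => x / 12) (v - (u + 2)) from rfl,
        intervalIntegral.integral_comp_sub_right (fun x : ℝ => x / 12) (u + 2),
        show (u:ℝ) + 2 - (u + 2) = 0 by ring, show t - 1 - (u + 2) = t - u - 3 by ring,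
        intervalIntegral.integral_div, integral_id]
      ring
    rw [hcomp] at key
    calc ‖∫ v in (u + 2)..(t - 1), (1 / v) * Real.log ((v - 1) / (u + 1))‖
        ≤ |(t - u - 3) ^ 2 / 24| := key
      _ = (t - u - 3) ^ 2 / 24 := abs_of_nonneg (by positivity)
  -- Bound for the middle integral
  have mid_bd : ∀ t ∈ Set.Ioc (5:ℝ) 5.6,
      ‖∫ u in (2:ℝ)..(t - 3), (Real.log (u - 1) / u) *
          ∫ v in (u + 2)..(t - 1), (1 / v) * Real.log ((v - 1) / (u + 1))‖
        ≤ (t - 5) ^ 4 / 576 := by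
    intro t ht
    have ht5 : (5:ℝ) < t := ht.1
    have hle : (2:ℝ) ≤ t - 3 := by linarith
    have hbd : ∀ u ∈ Set.uIoc (2:ℝ) (t - 3),
        ‖(Real.log (u - 1) / u) *
            ∫ v in (u + 2)..(t - 1), (1 / v) * Real.log ((v - 1) / (u + 1))‖
          ≤ (u - 2) * (t - u - 3) ^ 2 / 48 := by
      intro u hu
      rw [Set.uIoc_of_le hle] at hu
      have hu2 : (2:ℝ) < u := hu.1
      have hupos : (0:ℝ) < u := by linarith
      have hlog0 : 0 ≤ Real.log (u - 1) := Real.log_nonneg (by linarith)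
      have hlogle : Real.log (u - 1) ≤ u - 2 := by
        have := Real.log_le_sub_one_of_pos (by linarith : (0:ℝ) < u - 1)
        linarith
      have hco : Real.log (u - 1) / u ≤ (u - 2) / 2 :=
        div_le_div₀ (by linarith) hlogle (by norm_num) (by linarith)
      have hib := inner_bd t ht u hu
      rw [norm_mul]
      have h1 : ‖Real.log (u - 1) / u‖ = Real.log (u - 1) / u := by
        rw [Real.norm_eq_abs, abs_of_nonneg (by positivity)]
      rw [h1]
      calc Real.log (u - 1) / u * ‖∫ v in (u + 2)..(t - 1),
              (1 / v) * Real.log ((v - 1) / (u + 1))‖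
          ≤ ((u - 2) / 2) * ((t - u - 3) ^ 2 / 24) := by
            apply mul_le_mul hco hib (norm_nonneg _) (by linarith)
        _ = (u - 2) * (t - u - 3) ^ 2 / 48 := by ring
    have hgint : IntervalIntegrable (fun u : ℝ => (u - 2) * (t - u - 3) ^ 2 / 48)
        volume 2 (t - 3) := (Continuous.intervalIntegrable (by continuity)) _ _
    have key := intervalIntegral.norm_integral_le_abs_of_norm_le
      (ae_restrict_of_forall_mem measurableSet_uIoc hbd) hgint
    have hcomp : (∫ u in (2:ℝ)..(t - 3), (u - 2) * (t - u - 3) ^ 2 / 48)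
        = (t - 5) ^ 4 / 576 := by
      have heq : ∀ u : ℝ, (u - 2) * (t - u - 3) ^ 2 / 48
          = (fun x : ℝ => x * ((t - 5) - x) ^ 2 / 48) (u - 2) := by
        intro u; simp only; ring
      rw [intervalIntegral.integral_congr (fun u _ => heq u),
        intervalIntegral.integral_comp_sub_right (fun x : ℝ => x * ((t - 5) - x) ^ 2 / 48) 2,
        show (2:ℝ) - 2 = 0 by ring, show t - 3 - 2 = t - 5 by ring,
        intervalIntegral.integral_div, poly_int (t - 5)]
      ring
    rw [hcomp] at key
    calc ‖∫ u in (2:ℝ)..(t - 3), (Real.log (u - 1) / u) *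
            ∫ v in (u + 2)..(t - 1), (1 / v) * Real.log ((v - 1) / (u + 1))‖
        ≤ |(t - 5) ^ 4 / 576| := key
      _ = (t - 5) ^ 4 / 576 := abs_of_nonneg (by positivity)
  -- Bound for the outer integrand
  have out_bd : ∀ t ∈ Set.uIoc (5:ℝ) 5.6,
      ‖(1 / t) * (1 / (6.6 - t) - 1 / 5.6) *
          ∫ u in (2:ℝ)..(t - 3), (Real.log (u - 1) / u) *
            ∫ v in (u + 2)..(t - 1), (1 / v) * Real.log ((v - 1) / (u + 1))‖
        ≤ (23 / 28) * ((t - 5) ^ 4 / 2880) := by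
    intro t ht
    rw [Set.uIoc_of_le (by norm_num)] at ht
    have ht5 : (5:ℝ) < t := ht.1
    have ht6 : t ≤ 5.6 := ht.2
    have h66 : (1:ℝ) ≤ 6.6 - t := by linarith
    have hfac0 : 0 ≤ 1 / (6.6 - t) - 1 / 5.6 := by
      have h := one_div_le_one_div_of_le (by linarith : (0:ℝ) < 6.6 - t)
        (by linarith : (6.6:ℝ) - t ≤ 5.6)
      linarith
    have hfac1 : 1 / (6.6 - t) - 1 / 5.6 ≤ 23 / 28 := by
      have h : 1 / (6.6 - t) ≤ 1 := by
        rw [div_le_one (by linarith)]; linarith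
      have h2 : (1:ℝ) - 1 / 5.6 = 23 / 28 := by norm_num
      linarith
    have h1t : 1 / t ≤ 1 / 5 := by
      apply one_div_le_one_div_of_le <;> linarith
    rw [norm_mul]
    have h2 : ‖(1 / t) * (1 / (6.6 - t) - 1 / 5.6)‖ ≤ (1 / 5) * (23 / 28) := by
      rw [norm_mul, Real.norm_eq_abs, Real.norm_eq_abs,
        abs_of_nonneg (by positivity : (0:ℝ) ≤ 1 / t), abs_of_nonneg hfac0]
      apply mul_le_mul h1t hfac1 hfac0 (by norm_num)
    calc ‖(1 / t) * (1 / (6.6 - t) - 1 / 5.6)‖ * ‖∫ u in (2:ℝ)..(t - 3),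
            (Real.log (u - 1) / u) *
            ∫ v in (u + 2)..(t - 1), (1 / v) * Real.log ((v - 1) / (u + 1))‖
        ≤ ((1 / 5) * (23 / 28)) * ((t - 5) ^ 4 / 576) := by
          apply mul_le_mul h2 (mid_bd t ht) (norm_nonneg _) (by norm_num)
      _ = (23 / 28) * ((t - 5) ^ 4 / 2880) := by ring
  have hgint : IntervalIntegrable (fun t : ℝ => (23 / 28) * ((t - 5) ^ 4 / 2880))
      volume 5 5.6 := (Continuous.intervalIntegrable (by continuity)) _ _
  have key := intervalIntegral.norm_integral_le_abs_of_norm_le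
    (ae_restrict_of_forall_mem measurableSet_uIoc out_bd) hgint
  have hcomp : (∫ t in (5:ℝ)..(5.6:ℝ), (23 / 28) * ((t - 5) ^ 4 / 2880))
      = (23 / 28) * ((0.6:ℝ) ^ 5 / 5) / 2880 := by
    have heq : ∀ t : ℝ, (23 / 28) * ((t - 5) ^ 4 / 2880)
        = (fun x : ℝ => (23 / 28) * (x ^ 4 / 2880)) (t - 5) := fun t => rfl
    rw [intervalIntegral.integral_congr (fun t _ => heq t),
      intervalIntegral.integral_comp_sub_right (fun x : ℝ => (23 / 28) * (x ^ 4 / 2880)) 5,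
      show (5:ℝ) - 5 = 0 by ring, show (5.6:ℝ) - 5 = 0.6 by norm_num,
      intervalIntegral.integral_const_mul, intervalIntegral.integral_div, integral_pow]
    norm_num
  rw [hcomp] at key
  have habs : |(23 / 28 : ℝ) * ((0.6:ℝ) ^ 5 / 5) / 2880| < 0.00001 := by
    rw [abs_of_nonneg (by positivity)]
    norm_num
  calc (∫ t in (5:ℝ)..(5.6:ℝ), (1 / t) * (1 / (6.6 - t) - 1 / 5.6) *
        ∫ u in (2:ℝ)..(t - 3), (Real.log (u - 1) / u) *
          ∫ v in (u + 2)..(t - 1), (1 / v) * Real.log ((v - 1) / (u + 1)))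
      ≤ ‖∫ t in (5:ℝ)..(5.6:ℝ), (1 / t) * (1 / (6.6 - t) - 1 / 5.6) *
        ∫ u in (2:ℝ)..(t - 3), (Real.log (u - 1) / u) *
          ∫ v in (u + 2)..(t - 1), (1 / v) * Real.log ((v - 1) / (u + 1))‖ :=
        Real.le_norm_self _
    _ ≤ |(23 / 28 : ℝ) * ((0.6:ℝ) ^ 5 / 5) / 2880| := key
    _ < 0.00001 := habs
end
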